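/- Let r ≥ 2. A sequence (d_1,...,d_n) of nonnegative integers with d_1 ≥ d_2 ≥ ... ≥ d_n is the degree sequence of an undirected graph with edge weights in {0,1,...,r-1} if and only if ∑_{i=1}^n d_i is even and for every k = 1,...,n, ∑_{i=1}^k d_i ≤ (r-1)k(k-1) + ∑_{j=k+1}^n min{d_j, (r-1)k}. -/

import Mathlib

open Finset

section EG
variable {n : ℕ}

def Realizes (c : ℕ) (d : Fin n → ℕ) (a : Matrix (Fin n) (Fin n) ℕ) : Prop :=
  (∀ i j, a i j ≤ c) ∧ (∀ i j, a i j = a j i) ∧ (∀ i, a i i = 0) ∧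
    ∀ i, d i = ∑ j ∈ Finset.univ.erase i, a i j

def Good (c : ℕ) (d : Fin n → ℕ) : Prop :=
  ∀ S : Finset (Fin n),
    ∑ i ∈ S, d i ≤ c * S.card * (S.card - 1) + ∑ j ∈ Sᶜ, min (d j) (c * S.card)

lemma union_erase_compl {S : Finset (Fin n)} {v : Fin n} (hv : v ∈ S) (f : Fin n → ℕ) :
    ∑ j ∈ univ.erase v, f j = ∑ j ∈ S.erase v, f j + ∑ j ∈ Sᶜ, f j := by
  rw [← Finset.sum_union (by
    rw [Finset.disjoint_left]; intro x hx hx'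
    exact (Finset.mem_compl.1 hx') (Finset.mem_of_mem_erase hx))]
  apply Finset.sum_congr _ fun _ _ => rfl
  ext j
  by_cases hj : j ∈ S <;> by_cases hjv : j = v <;> simp_all

lemma union_compl_erase {S : Finset (Fin n)} {v : Fin n} (hv : v ∉ S) (f : Fin n → ℕ) :
    ∑ j ∈ univ.erase v, f j = ∑ j ∈ S, f j + ∑ j ∈ Sᶜ.erase v, f j := by
  rw [← Finset.sum_union (by
    rw [Finset.disjoint_left]; intro x hx hx'
    exact (Finset.mem_compl.1 (Finset.mem_of_mem_erase hx')) hx)]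
  apply Finset.sum_congr _ fun _ _ => rfl
  ext j
  by_cases hj : j ∈ S <;> by_cases hjv : j = v <;> simp_all

lemma card_filter_lt {k : ℕ} (hk : k ≤ n) :
    (univ.filter fun i : Fin n => (i : ℕ) < k).card = k := by
  induction k with
  | zero => simp
  | succ m ih =>
    have hm : m < n := hk
    have hstep : (univ.filter fun i : Fin n => (i : ℕ) < m + 1)
        = insert ⟨m, hm⟩ (univ.filter fun i : Fin n => (i : ℕ) < m) := by
      ext i
      simp only [Finset.mem_filter, Finset.mem_univ, true_and, Finset.mem_insert, Fin.ext_iff]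
      omega
    rw [hstep, Finset.card_insert_of_notMem (by simp), ih (by omega)]

lemma sum_top_k {g : Fin n → ℕ} (hg : ∀ i j : Fin n, i ≤ j → g j ≤ g i) (S : Finset (Fin n)) :
    ∑ i ∈ S, g i ≤ ∑ i ∈ univ.filter (fun i : Fin n => (i : ℕ) < S.card), g i := by
  generalize hW : (∑ i ∈ S, (i : ℕ)) = W
  induction W using Nat.strong_induction_on generalizing S with
  | _ W ih =>
  by_cases hSP : S = univ.filter (fun i : Fin n => (i : ℕ) < S.card)
  · conv_lhs => rw [hSP]
  · have hkn : S.card ≤ n := by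
      have := Finset.card_le_univ S
      simpa [Finset.card_univ] using this
    have hPcard : (univ.filter fun i : Fin n => (i : ℕ) < S.card).card = S.card :=
      card_filter_lt hkn
    have hnotsub : ¬ (univ.filter fun i : Fin n => (i : ℕ) < S.card) ⊆ S := by
      intro hsub
      exact hSP (Finset.eq_of_subset_of_card_le hsub hPcard.ge).symm
    have hnotsub2 : ¬ S ⊆ (univ.filter fun i : Fin n => (i : ℕ) < S.card) := by
      intro hsub
      exact hSP (Finset.eq_of_subset_of_card_le hsub hPcard.le)
    obtain ⟨b, hbP, hbS⟩ := Finset.not_subset.1 hnotsub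
    obtain ⟨a, haS, haP⟩ := Finset.not_subset.1 hnotsub2
    have hbk : (b : ℕ) < S.card := (Finset.mem_filter.1 hbP).2
    have hak : ¬ (a : ℕ) < S.card := fun h => haP (Finset.mem_filter.2 ⟨Finset.mem_univ a, h⟩)
    have hba : (b : ℕ) < (a : ℕ) := by omega
    have hgab : g a ≤ g b := hg b a (by omega)
    set S' := insert b (S.erase a) with hS'
    have hbnot : b ∉ S.erase a := fun h => hbS (Finset.mem_of_mem_erase h)
    have hcard' : S'.card = S.card := by
      rw [hS', Finset.card_insert_of_notMem hbnot, Finset.card_erase_of_mem haS]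
      have : 1 ≤ S.card := Finset.card_pos.2 ⟨a, haS⟩
      omega
    have hWa : (a : ℕ) ≤ W := by
      rw [← hW]; exact Finset.single_le_sum (f := fun i : Fin n => (i : ℕ)) (fun _ _ => Nat.zero_le _) haS
    have e1 : ∑ i ∈ S', (i : ℕ) = (b : ℕ) + ∑ i ∈ S.erase a, (i : ℕ) := by
      rw [hS', Finset.sum_insert hbnot]
    have e2 : (a : ℕ) + ∑ i ∈ S.erase a, (i : ℕ) = ∑ i ∈ S, (i : ℕ) :=
      Finset.add_sum_erase S (fun i : Fin n => (i : ℕ)) haS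
    have hWlt : ∑ i ∈ S', (i : ℕ) < W := by omega
    have hstep : ∑ i ∈ S, g i ≤ ∑ i ∈ S', g i := by
      rw [hS', Finset.sum_insert hbnot, ← Finset.add_sum_erase S g haS]
      omega
    calc ∑ i ∈ S, g i ≤ ∑ i ∈ S', g i := hstep
      _ ≤ ∑ i ∈ univ.filter (fun i : Fin n => (i : ℕ) < S'.card), g i :=
          ih _ hWlt S' rfl
      _ = ∑ i ∈ univ.filter (fun i : Fin n => (i : ℕ) < S.card), g i := by rw [hcard']

lemma even_total {c : ℕ} {d : Fin n → ℕ} {a : Matrix (Fin n) (Fin n) ℕ}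
    (h : Realizes c d a) : Even (∑ i, d i) := by
  obtain ⟨hb, hsym, hdiag, hdeg⟩ := h
  have h1 : ∑ i, d i = ∑ i, ∑ j, a i j := by
    refine Finset.sum_congr rfl fun i _ => ?_
    rw [hdeg i, Finset.sum_erase _ (hdiag i)]
  have h2 : ∑ i, ∑ j, a i j
      = ∑ p ∈ (univ ×ˢ univ : Finset (Fin n × Fin n)), a p.1 p.2 := by
    rw [Finset.sum_product]
  set L := (univ ×ˢ univ : Finset (Fin n × Fin n)) with hL
  have h3 : ∑ p ∈ L, a p.1 p.2
      = ∑ p ∈ L.filter (fun p => p.1 < p.2), a p.1 p.2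
        + ∑ p ∈ L.filter (fun p => ¬ p.1 < p.2), a p.1 p.2 :=
    (Finset.sum_filter_add_sum_filter_not L _ _).symm
  have h4 : ∑ p ∈ L.filter (fun p => ¬ p.1 < p.2), a p.1 p.2
      = ∑ p ∈ (L.filter (fun p => ¬ p.1 < p.2)).filter (fun p => p.2 < p.1), a p.1 p.2
        + ∑ p ∈ (L.filter (fun p => ¬ p.1 < p.2)).filter (fun p => ¬ p.2 < p.1), a p.1 p.2 :=
    (Finset.sum_filter_add_sum_filter_not _ _ _).symm
  have h5 : ∑ p ∈ (L.filter (fun p => ¬ p.1 < p.2)).filter (fun p => ¬ p.2 < p.1), a p.1 p.2 = 0 := by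
    apply Finset.sum_eq_zero
    intro p hp
    simp only [Finset.mem_filter] at hp
    have : p.1 = p.2 := le_antisymm (not_lt.1 hp.2) (not_lt.1 hp.1.2)
    rw [this]; exact hdiag p.2
  have h6 : (L.filter (fun p => ¬ p.1 < p.2)).filter (fun p => p.2 < p.1)
      = L.filter (fun p : Fin n × Fin n => p.2 < p.1) := by
    rw [Finset.filter_filter]
    apply Finset.filter_congr
    intro p _
    constructor
    · rintro ⟨_, h⟩; exact h
    · intro h; exact ⟨h.asymm, h⟩
  have h7 : ∑ p ∈ L.filter (fun p : Fin n × Fin n => p.2 < p.1), a p.1 p.2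
      = ∑ p ∈ L.filter (fun p : Fin n × Fin n => p.1 < p.2), a p.1 p.2 := by
    refine Finset.sum_bij' (i := fun p _ => (p.2, p.1)) (j := fun p _ => (p.2, p.1))
      ?_ ?_ ?_ ?_ ?_
    · intro p hp
      simp only [hL, Finset.mem_filter, Finset.mem_product, Finset.mem_univ, true_and] at hp ⊢
      simpa using hp
    · intro p hp
      simp only [hL, Finset.mem_filter, Finset.mem_product, Finset.mem_univ, true_and] at hp ⊢
      simpa using hp
    · intro p _; rfl
    · intro p _; rfl
    · intro p _; exact hsym p.1 p.2
  refine ⟨∑ p ∈ L.filter (fun p : Fin n × Fin n => p.1 < p.2), a p.1 p.2, ?_⟩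
  rw [h1, h2, h3, h4, h5, h6, h7]
  omega

lemma realizes_good {c : ℕ} {d : Fin n → ℕ} {a : Matrix (Fin n) (Fin n) ℕ}
    (h : Realizes c d a) : Good c d := by
  obtain ⟨hb, hsym, hdiag, hdeg⟩ := h
  intro S
  have hsplit : ∀ i ∈ S, d i = ∑ j ∈ S.erase i, a i j + ∑ j ∈ Sᶜ, a i j := by
    intro i hi
    rw [hdeg i, union_erase_compl hi]
  calc ∑ i ∈ S, d i = ∑ i ∈ S, (∑ j ∈ S.erase i, a i j + ∑ j ∈ Sᶜ, a i j) :=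
        Finset.sum_congr rfl hsplit
    _ = ∑ i ∈ S, ∑ j ∈ S.erase i, a i j + ∑ i ∈ S, ∑ j ∈ Sᶜ, a i j := Finset.sum_add_distrib
    _ ≤ c * S.card * (S.card - 1) + ∑ j ∈ Sᶜ, min (d j) (c * S.card) := by
        have hA : ∑ i ∈ S, ∑ j ∈ S.erase i, a i j ≤ c * S.card * (S.card - 1) := by
          calc ∑ i ∈ S, ∑ j ∈ S.erase i, a i j ≤ ∑ _i ∈ S, c * (S.card - 1) := by
                apply Finset.sum_le_sum
                intro i hi
                calc ∑ j ∈ S.erase i, a i j ≤ (S.erase i).card • c :=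
                      Finset.sum_le_card_nsmul _ _ _ (fun j _ => hb i j)
                  _ = c * (S.card - 1) := by
                      rw [Finset.card_erase_of_mem hi, smul_eq_mul, mul_comm]
            _ = c * S.card * (S.card - 1) := by
                rw [Finset.sum_const, smul_eq_mul]; ring
        have hB : ∑ i ∈ S, ∑ j ∈ Sᶜ, a i j ≤ ∑ j ∈ Sᶜ, min (d j) (c * S.card) := by
          rw [Finset.sum_comm (f := fun i j => a i j)]
          apply Finset.sum_le_sum
          intro j hj
          have hjS : j ∉ S := Finset.mem_compl.1 hj
          apply le_min
          · calc ∑ i ∈ S, a i j = ∑ i ∈ S, a j i := Finset.sum_congr rfl (fun i _ => hsym i j)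
              _ ≤ ∑ i ∈ univ.erase j, a j i := Finset.sum_le_sum_of_subset (by
                  intro x hx
                  exact Finset.mem_erase.2 ⟨fun he => hjS (he ▸ hx), Finset.mem_univ x⟩)
              _ = d j := (hdeg j).symm
          · calc ∑ i ∈ S, a i j ≤ S.card • c := Finset.sum_le_card_nsmul _ _ _ (fun i _ => hb i j)
              _ = c * S.card := by rw [smul_eq_mul, mul_comm]
        exact Nat.add_le_add hA hB

lemma claimC {c : ℕ} (hc : 1 ≤ c) {d : Fin n → ℕ} {v s : Fin n} (hG : Good c d)
    (hsv : s ≠ v) (hs : ∀ j, j ≠ v → d j ≤ d s)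
    {S : Finset (Fin n)} (hvS : v ∈ S) (hsS : s ∉ S)
    (htight : c * S.card * (S.card - 1) + ∑ j ∈ Sᶜ, min (d j) (c * S.card) ≤ ∑ i ∈ S, d i)
    (hslack : d v + 1 ≤ ∑ j ∈ univ.erase v, min c (d j)) : False := by
  obtain ⟨K, hK⟩ : ∃ K, S.card = K := ⟨_, rfl⟩
  rw [hK] at htight
  have htEq : ∑ i ∈ S, d i = c * K * (K - 1) + ∑ j ∈ Sᶜ, min (d j) (c * K) := by
    have := hG S; rw [hK] at this; exact le_antisymm this htight
  have hK1 : 1 ≤ K := by have := Finset.card_pos.2 ⟨v, hvS⟩; omega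
  have hcK : c ≤ c * K := by have := Nat.mul_le_mul_left c hK1; omega
  by_cases hK2 : K = 1
  · subst hK2
    have hSv : S = {v} := by
      obtain ⟨x, hx⟩ := Finset.card_eq_one.1 hK
      have : v = x := by rw [hx, Finset.mem_singleton] at hvS; exact hvS
      rw [hx, this]
    rw [hSv] at htEq
    simp only [Finset.sum_singleton, compl_singleton] at htEq
    have hmm : ∑ j ∈ univ.erase v, min (d j) (c * 1) = ∑ j ∈ univ.erase v, min c (d j) :=
      Finset.sum_congr rfl fun j _ => by rw [mul_one, min_comm]
    rw [hmm] at htEq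
    omega
  · have hK2' : 2 ≤ K := by omega
    have key : ∀ i ∈ S.erase v, d i = d s := by
      intro i hi
      obtain ⟨hiv, hiS⟩ := Finset.mem_erase.1 hi
      have his : i ≠ s := fun h => hsS (h ▸ hiS)
      have hsnotin : s ∉ S.erase i := fun h => hsS (Finset.mem_of_mem_erase h)
      have hcard' : (insert s (S.erase i)).card = K := by
        rw [Finset.card_insert_of_notMem hsnotin, Finset.card_erase_of_mem hiS, hK]; omega
      have hcompl' : (insert s (S.erase i))ᶜ = insert i (Sᶜ.erase s) := by
        rw [compl_insert, compl_erase, Finset.erase_insert_of_ne his]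
      have hGS' := hG (insert s (S.erase i))
      rw [hcard', hcompl'] at hGS'
      have e1 : ∑ x ∈ insert s (S.erase i), d x = d s + ∑ x ∈ S.erase i, d x :=
        Finset.sum_insert hsnotin
      have e2 : d i + ∑ x ∈ S.erase i, d x = ∑ x ∈ S, d x := Finset.add_sum_erase S d hiS
      have hic : i ∉ Sᶜ.erase s := fun h => (Finset.mem_compl.1 (Finset.mem_of_mem_erase h)) hiS
      have e3 : ∑ j ∈ insert i (Sᶜ.erase s), min (d j) (c * K)
          = min (d i) (c * K) + ∑ j ∈ Sᶜ.erase s, min (d j) (c * K) := Finset.sum_insert hic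
      have e4 : min (d s) (c * K) + ∑ j ∈ Sᶜ.erase s, min (d j) (c * K)
          = ∑ j ∈ Sᶜ, min (d j) (c * K) :=
        Finset.add_sum_erase Sᶜ (fun j => min (d j) (c * K)) (Finset.mem_compl.2 hsS)
      have hdis : d i ≤ d s := hs i hiv
      omega
    have ecard : (S.erase v).card = K - 1 := by rw [Finset.card_erase_of_mem hvS, hK]
    have hsum_erase : ∑ i ∈ S.erase v, d i = (K - 1) * d s := by
      rw [Finset.sum_congr rfl (fun i hi => key i hi), Finset.sum_const, ecard, smul_eq_mul]
    have hSsum : d v + (K - 1) * d s = ∑ i ∈ S, d i := by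
      rw [← Finset.add_sum_erase S d hvS, hsum_erase]
    have hsc : s ∈ Sᶜ := Finset.mem_compl.2 hsS
    have hsplit1 : min (d s) (c * K) + ∑ j ∈ Sᶜ.erase s, min (d j) (c * K)
        = ∑ j ∈ Sᶜ, min (d j) (c * K) :=
      Finset.add_sum_erase Sᶜ (fun j => min (d j) (c * K)) hsc
    have hslack2 : d v + 1
        ≤ (K - 1) * min c (d s) + min c (d s) + ∑ j ∈ Sᶜ.erase s, min c (d j) := by
      have e5 : ∑ j ∈ univ.erase v, min c (d j)
          = ∑ j ∈ S.erase v, min c (d j) + ∑ j ∈ Sᶜ, min c (d j) :=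
        union_erase_compl hvS _
      have e6 : ∑ j ∈ S.erase v, min c (d j) = (K - 1) * min c (d s) := by
        rw [Finset.sum_congr rfl (fun i hi => by rw [key i hi]), Finset.sum_const, ecard,
          smul_eq_mul]
      have e7 : min c (d s) + ∑ j ∈ Sᶜ.erase s, min c (d j) = ∑ j ∈ Sᶜ, min c (d j) :=
        Finset.add_sum_erase Sᶜ (fun j => min c (d j)) hsc
      omega
    by_cases hds : d s ≤ c * K
    · have hmcs : ∑ j ∈ Sᶜ.erase s, min c (d j) ≤ ∑ j ∈ Sᶜ.erase s, min (d j) (c * K) :=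
        Finset.sum_le_sum fun j _ => by omega
      have h8 : (K - 1) * d s ≤ (K - 2) * (c * K) + d s := by
        have h9 : (K - 2) * d s ≤ (K - 2) * (c * K) := Nat.mul_le_mul_left _ hds
        have h10 : (K - 1) * d s = (K - 2) * d s + d s := by
          have hh : K - 1 = (K - 2) + 1 := by omega
          rw [hh, add_mul, one_mul]
        omega
      have h7 : (K - 1) * min c (d s) ≤ (K - 1) * c := Nat.mul_le_mul_left _ (min_le_left _ _)
      have hid1 : c * K * (K - 1) = (K - 2) * (c * K) + c * K := by
        have hh : K - 1 = (K - 2) + 1 := by omega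
        rw [hh]; ring
      have hid2 : (K - 1) * c + c = c * K := by
        have hh : K - 1 + 1 = K := by omega
        calc (K - 1) * c + c = ((K - 1) + 1) * c := by ring
          _ = K * c := by rw [hh]
          _ = c * K := by ring
      omega
    · push_neg at hds
      have hmc : min c (d s) = c := by omega
      rw [hmc] at hslack2
      set p := ((Sᶜ.erase s).filter (fun j => c * K + 1 ≤ d j)).card with hp
      have hb1 : ∑ j ∈ Sᶜ.erase s, min c (d j) + p * (c * K)
          ≤ ∑ j ∈ Sᶜ.erase s, min (d j) (c * K) + p * c := by
        rw [← Finset.sum_filter_add_sum_filter_not (Sᶜ.erase s) (fun j => c * K + 1 ≤ d j)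
              (fun j => min c (d j)),
            ← Finset.sum_filter_add_sum_filter_not (Sᶜ.erase s) (fun j => c * K + 1 ≤ d j)
              (fun j => min (d j) (c * K))]
        have e8 : ∑ j ∈ (Sᶜ.erase s).filter (fun j => c * K + 1 ≤ d j), min c (d j) = p * c := by
          have hall : ∀ j ∈ (Sᶜ.erase s).filter (fun j => c * K + 1 ≤ d j), min c (d j) = c :=
            fun j hj => by have := (Finset.mem_filter.1 hj).2; omega
          rw [Finset.sum_congr rfl hall, Finset.sum_const, smul_eq_mul, hp]
        have e9 : ∑ j ∈ (Sᶜ.erase s).filter (fun j => c * K + 1 ≤ d j), min (d j) (c * K)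
            = p * (c * K) := by
          have hall : ∀ j ∈ (Sᶜ.erase s).filter (fun j => c * K + 1 ≤ d j),
              min (d j) (c * K) = c * K :=
            fun j hj => by have := (Finset.mem_filter.1 hj).2; omega
          rw [Finset.sum_congr rfl hall, Finset.sum_const, smul_eq_mul, hp]
        have e10 : ∑ j ∈ (Sᶜ.erase s).filter (fun j => ¬ c * K + 1 ≤ d j), min c (d j)
            ≤ ∑ j ∈ (Sᶜ.erase s).filter (fun j => ¬ c * K + 1 ≤ d j), min (d j) (c * K) :=
          Finset.sum_le_sum fun j _ => by omega
        omega
      have hsScard : (insert s S).card = K + 1 := by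
        rw [Finset.card_insert_of_notMem hsS, hK]
      have hsScompl : (insert s S)ᶜ = Sᶜ.erase s := compl_insert
      have hGS2 := hG (insert s S)
      rw [hsScard, hsScompl, Finset.sum_insert hsS] at hGS2
      simp only [Nat.add_sub_cancel] at hGS2
      have hb2 : ∑ j ∈ Sᶜ.erase s, min (d j) (c * (K + 1))
          ≤ ∑ j ∈ Sᶜ.erase s, min (d j) (c * K) + p * c := by
        rw [← Finset.sum_filter_add_sum_filter_not (Sᶜ.erase s) (fun j => c * K + 1 ≤ d j)
              (fun j => min (d j) (c * (K + 1))),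
            ← Finset.sum_filter_add_sum_filter_not (Sᶜ.erase s) (fun j => c * K + 1 ≤ d j)
              (fun j => min (d j) (c * K))]
        have hck1 : c * (K + 1) = c * K + c := by ring
        have e12 : ∑ j ∈ (Sᶜ.erase s).filter (fun j => c * K + 1 ≤ d j), min (d j) (c * (K + 1))
            ≤ ∑ j ∈ (Sᶜ.erase s).filter (fun j => c * K + 1 ≤ d j), min (d j) (c * K) + p * c := by
          calc ∑ j ∈ (Sᶜ.erase s).filter (fun j => c * K + 1 ≤ d j), min (d j) (c * (K + 1))
              ≤ ∑ j ∈ (Sᶜ.erase s).filter (fun j => c * K + 1 ≤ d j), (min (d j) (c * K) + c) :=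
                Finset.sum_le_sum fun j _ => by rw [hck1]; omega
            _ = _ := by rw [Finset.sum_add_distrib, Finset.sum_const, smul_eq_mul, hp]
        have e13 : ∑ j ∈ (Sᶜ.erase s).filter (fun j => ¬ c * K + 1 ≤ d j), min (d j) (c * (K + 1))
            = ∑ j ∈ (Sᶜ.erase s).filter (fun j => ¬ c * K + 1 ≤ d j), min (d j) (c * K) :=
          Finset.sum_congr rfl fun j hj => by
            have := (Finset.mem_filter.1 hj).2; rw [hck1]; omega
        omega
      have hid3 : c * (K + 1) * K = c * K * (K - 1) + 2 * (c * K) := by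
        cases K with
        | zero => ring
        | succ m => simp only [Nat.succ_sub_one]; ring
      have hds2 : d s ≤ c * K + p * c := by omega
      have hmul1 : (K - 1) * d s ≤ (K - 1) * (c * K + p * c) := Nat.mul_le_mul_left _ hds2
      have hfinal : (K - 1) * (c * K + p * c) + ((K - 1) * c + c) + p * c
          = c * K * (K - 1) + c * K + p * (c * K) := by
        obtain ⟨m, hm⟩ : ∃ m, K = m + 1 := ⟨K - 1, by omega⟩
        subst hm
        simp only [Nat.add_sub_cancel]
        ring
      omega

lemma lemmaA {c : ℕ} (hc : 1 ≤ c) {d : Fin n → ℕ} {v s : Fin n}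
    (hG : Good c d) (hE : Even (∑ i, d i)) (hsv : s ≠ v)
    (hs : ∀ j, j ≠ v → d j ≤ d s) (hs1 : 1 ≤ d s)
    (hslack : d v + 1 ≤ ∑ j ∈ univ.erase v, min c (d j)) :
    Good c (fun i => if i = v then d v + 1 else if i = s then d s - 1 else d i) := by
  set d' := fun i => if i = v then d v + 1 else if i = s then d s - 1 else d i with hd'
  have hd'v : d' v = d v + 1 := by simp [hd']
  have hd's : d' s = d s - 1 := by simp [hd', hsv]
  have hd'o : ∀ j, j ≠ v → j ≠ s → d' j = d j := fun j h1 h2 => by simp [hd', h1, h2]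
  intro S
  obtain ⟨K, hK⟩ : ∃ K, S.card = K := ⟨_, rfl⟩
  rw [hK]
  have hGS := hG S; rw [hK] at hGS
  by_cases hvS : v ∈ S <;> by_cases hsS : s ∈ S
  · -- case 1 : v ∈ S, s ∈ S
    have hsS' : s ∈ S.erase v := Finset.mem_erase.2 ⟨hsv, hsS⟩
    have e1 : ∑ i ∈ S, d' i = d' v + (d' s + ∑ i ∈ (S.erase v).erase s, d' i) := by
      rw [Finset.add_sum_erase _ d' hsS', Finset.add_sum_erase _ d' hvS]
    have e2 : ∑ i ∈ S, d i = d v + (d s + ∑ i ∈ (S.erase v).erase s, d i) := by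
      rw [Finset.add_sum_erase _ d hsS', Finset.add_sum_erase _ d hvS]
    have e4 : ∑ i ∈ (S.erase v).erase s, d' i = ∑ i ∈ (S.erase v).erase s, d i :=
      Finset.sum_congr rfl fun i hi => by
        obtain ⟨his, hi2⟩ := Finset.mem_erase.1 hi
        exact hd'o i (Finset.mem_erase.1 hi2).1 his
    have e6 : ∑ j ∈ Sᶜ, min (d' j) (c * K) = ∑ j ∈ Sᶜ, min (d j) (c * K) :=
      Finset.sum_congr rfl fun j hj => by
        rw [hd'o j (fun h => (Finset.mem_compl.1 hj) (h ▸ hvS))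
          (fun h => (Finset.mem_compl.1 hj) (h ▸ hsS))]
    rw [e6]
    omega
  · -- case 3 : v ∈ S, s ∉ S
    have h1 : ∑ i ∈ S, d i + 1 ≤ c * K * (K - 1) + ∑ j ∈ Sᶜ, min (d j) (c * K) := by
      by_contra hcon
      push_neg at hcon
      exact claimC hc hG hsv hs hvS hsS (by rw [hK]; omega) hslack
    have e1 : ∑ i ∈ S, d' i = ∑ i ∈ S, d i + 1 := by
      have r1 : d' v + ∑ i ∈ S.erase v, d' i = ∑ i ∈ S, d' i := Finset.add_sum_erase _ d' hvS
      have r2 : d v + ∑ i ∈ S.erase v, d i = ∑ i ∈ S, d i := Finset.add_sum_erase _ d hvS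
      have r3 : ∑ i ∈ S.erase v, d' i = ∑ i ∈ S.erase v, d i :=
        Finset.sum_congr rfl fun i hi => hd'o i (Finset.mem_erase.1 hi).1
          (fun h => hsS (h ▸ (Finset.mem_erase.1 hi).2))
      omega
    have hsc : s ∈ Sᶜ := Finset.mem_compl.2 hsS
    have e5 : min (d' s) (c * K) + ∑ j ∈ Sᶜ.erase s, min (d' j) (c * K)
        = ∑ j ∈ Sᶜ, min (d' j) (c * K) :=
      Finset.add_sum_erase Sᶜ (fun j => min (d' j) (c * K)) hsc
    have e6 : min (d s) (c * K) + ∑ j ∈ Sᶜ.erase s, min (d j) (c * K)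
        = ∑ j ∈ Sᶜ, min (d j) (c * K) :=
      Finset.add_sum_erase Sᶜ (fun j => min (d j) (c * K)) hsc
    have e7 : ∑ j ∈ Sᶜ.erase s, min (d' j) (c * K) = ∑ j ∈ Sᶜ.erase s, min (d j) (c * K) :=
      Finset.sum_congr rfl fun j hj => by
        obtain ⟨hjs, hj2⟩ := Finset.mem_erase.1 hj
        rw [hd'o j (fun h => (Finset.mem_compl.1 hj2) (h ▸ hvS)) hjs]
    rw [hd's] at e5
    by_cases hds : d s ≤ c * K
    · have hall : ∑ j ∈ Sᶜ, min (d j) (c * K) = ∑ j ∈ Sᶜ, d j :=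
        Finset.sum_congr rfl fun j hj => by
          have hjv : j ≠ v := fun h => (Finset.mem_compl.1 hj) (h ▸ hvS)
          have := hs j hjv; omega
      have hcomp : ∑ i ∈ S, d i + ∑ i ∈ Sᶜ, d i = ∑ i, d i := Finset.sum_add_sum_compl S d
      have heven2 : Even (c * K * (K - 1)) := by
        rcases Nat.even_or_odd K with he | ho
        · exact (he.mul_left c).mul_right (K - 1)
        · have h1' : Even (K - 1) := by obtain ⟨t, ht⟩ := ho; exact ⟨t, by omega⟩
          exact h1'.mul_left (c * K)
      obtain ⟨E1, hE1⟩ := hE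
      obtain ⟨E2, hE2⟩ := heven2
      omega
    · push_neg at hds
      omega
  · -- case 2 : v ∉ S, s ∈ S
    have e1 : ∑ i ∈ S, d' i + 1 = ∑ i ∈ S, d i := by
      have r1 : d' s + ∑ i ∈ S.erase s, d' i = ∑ i ∈ S, d' i := Finset.add_sum_erase _ d' hsS
      have r2 : d s + ∑ i ∈ S.erase s, d i = ∑ i ∈ S, d i := Finset.add_sum_erase _ d hsS
      have r3 : ∑ i ∈ S.erase s, d' i = ∑ i ∈ S.erase s, d i :=
        Finset.sum_congr rfl fun i hi =>
          hd'o i (fun h => hvS (h ▸ (Finset.mem_erase.1 hi).2)) (Finset.mem_erase.1 hi).1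
      omega
    have hvc : v ∈ Sᶜ := Finset.mem_compl.2 hvS
    have e5 : min (d' v) (c * K) + ∑ j ∈ Sᶜ.erase v, min (d' j) (c * K)
        = ∑ j ∈ Sᶜ, min (d' j) (c * K) :=
      Finset.add_sum_erase Sᶜ (fun j => min (d' j) (c * K)) hvc
    have e6 : min (d v) (c * K) + ∑ j ∈ Sᶜ.erase v, min (d j) (c * K)
        = ∑ j ∈ Sᶜ, min (d j) (c * K) :=
      Finset.add_sum_erase Sᶜ (fun j => min (d j) (c * K)) hvc
    have e7 : ∑ j ∈ Sᶜ.erase v, min (d' j) (c * K) = ∑ j ∈ Sᶜ.erase v, min (d j) (c * K) :=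
      Finset.sum_congr rfl fun j hj => by
        obtain ⟨hjv, hj2⟩ := Finset.mem_erase.1 hj
        rw [hd'o j hjv (fun h => (Finset.mem_compl.1 hj2) (h ▸ hsS))]
    rw [hd'v] at e5
    omega
  · -- case 4 : v ∉ S, s ∉ S
    rcases Nat.eq_zero_or_pos K with hK0 | hKpos
    · have hS0 : S = ∅ := Finset.card_eq_zero.1 (by omega)
      rw [hS0]
      simp
    · have e1 : ∑ i ∈ S, d' i = ∑ i ∈ S, d i :=
        Finset.sum_congr rfl fun i hi =>
          hd'o i (fun h => hvS (h ▸ hi)) (fun h => hsS (h ▸ hi))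
      have hvc : v ∈ Sᶜ := Finset.mem_compl.2 hvS
      have hsc' : s ∈ Sᶜ.erase v := Finset.mem_erase.2 ⟨hsv, Finset.mem_compl.2 hsS⟩
      have e5 : min (d' v) (c * K) + (min (d' s) (c * K)
            + ∑ j ∈ (Sᶜ.erase v).erase s, min (d' j) (c * K))
          = ∑ j ∈ Sᶜ, min (d' j) (c * K) := by
        rw [Finset.add_sum_erase _ (fun j => min (d' j) (c * K)) hsc',
          Finset.add_sum_erase _ (fun j => min (d' j) (c * K)) hvc]
      have e6 : min (d v) (c * K) + (min (d s) (c * K)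
            + ∑ j ∈ (Sᶜ.erase v).erase s, min (d j) (c * K))
          = ∑ j ∈ Sᶜ, min (d j) (c * K) := by
        rw [Finset.add_sum_erase _ (fun j => min (d j) (c * K)) hsc',
          Finset.add_sum_erase _ (fun j => min (d j) (c * K)) hvc]
      have e7 : ∑ j ∈ (Sᶜ.erase v).erase s, min (d' j) (c * K)
          = ∑ j ∈ (Sᶜ.erase v).erase s, min (d j) (c * K) :=
        Finset.sum_congr rfl fun j hj => by
          obtain ⟨hjs, hj2⟩ := Finset.mem_erase.1 hj
          rw [hd'o j (Finset.mem_erase.1 hj2).1 hjs]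
      rw [hd'v, hd's] at e5
      by_cases hv4 : d v + 1 ≤ c * K
      · omega
      · by_cases hs4 : c * K + 1 ≤ d s
        · omega
        · have hbound : ∑ i ∈ S, d i ≤ K * d s := by
            calc ∑ i ∈ S, d i ≤ S.card • d s :=
                  Finset.sum_le_card_nsmul _ _ _ (fun i hi => hs i (fun h => hvS (h ▸ hi)))
              _ = K * d s := by rw [hK, smul_eq_mul]
          have h5 : ∑ i ∈ S, d i + 1 ≤ c * K * (K - 1) + ∑ j ∈ Sᶜ, min (d j) (c * K) := by
            by_contra hcon
            push_neg at hcon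
            obtain ⟨m, hm⟩ : ∃ m, K = m + 1 := ⟨K - 1, by omega⟩
            subst hm
            have hq1 : m * d s ≤ m * (c * (m + 1)) := Nat.mul_le_mul_left _ (by omega)
            have hid : c * (m + 1) * (m + 1 - 1) = m * (c * (m + 1)) := by
              simp only [Nat.add_sub_cancel]; ring
            have hKd : (m + 1) * d s = m * d s + d s := by ring
            have hpos : 0 < c * (m + 1) := Nat.mul_pos (by omega) (by omega)
            omega
          omega

lemma lemmaB {c : ℕ} (hc : 1 ≤ c) {d : Fin n → ℕ} {v : Fin n} (hG : Good c d)
    (ht : d v = ∑ j ∈ univ.erase v, min c (d j)) :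
    Good c (fun j => if j = v then 0 else d j - min c (d j)) := by
  set dt := fun j : Fin n => if j = v then 0 else d j - min c (d j) with hdt
  have hdtv : dt v = 0 := by simp [hdt]
  suffices h : ∀ K (S : Finset (Fin n)), S.card = K →
      ∑ i ∈ S, dt i ≤ c * K * (K - 1) + ∑ j ∈ Sᶜ, min (dt j) (c * K) by
    intro S
    exact h S.card S rfl
  intro K
  induction K using Nat.strong_induction_on with
  | _ K ih =>
  intro S hK
  by_cases hex : ∃ i ∈ S, dt i = 0
  · obtain ⟨i, hiS, hi0⟩ := hex
    have hK1 : 1 ≤ K := by have := Finset.card_pos.2 ⟨i, hiS⟩; omega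
    have hprev := ih (K - 1) (by omega) (S.erase i) (by rw [Finset.card_erase_of_mem hiS, hK])
    have hcompl : (S.erase i)ᶜ = insert i Sᶜ := compl_erase
    have hinotc : i ∉ Sᶜ := fun h => (Finset.mem_compl.1 h) hiS
    have e1 : ∑ j ∈ (S.erase i)ᶜ, min (dt j) (c * (K - 1))
        = min (dt i) (c * (K - 1)) + ∑ j ∈ Sᶜ, min (dt j) (c * (K - 1)) := by
      rw [hcompl, Finset.sum_insert hinotc]
    have e2 : ∑ j ∈ S.erase i, dt j = ∑ j ∈ S, dt j := Finset.sum_erase S hi0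
    have e3 : ∑ j ∈ Sᶜ, min (dt j) (c * (K - 1)) ≤ ∑ j ∈ Sᶜ, min (dt j) (c * K) :=
      Finset.sum_le_sum fun j _ => by
        have : c * (K - 1) ≤ c * K := Nat.mul_le_mul_left _ (by omega)
        omega
    have e4 : c * (K - 1) * (K - 1 - 1) ≤ c * K * (K - 1) :=
      Nat.mul_le_mul (Nat.mul_le_mul_left _ (by omega)) (by omega)
    rw [e1] at hprev
    omega
  · push_neg at hex
    have hvS : v ∉ S := fun h => hex v h hdtv
    have hbig : ∀ i ∈ S, c + 1 ≤ d i := by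
      intro i hi
      have hne := hex i hi
      have hiv : i ≠ v := fun h => hne (h ▸ hdtv)
      have hdd : dt i = d i - min c (d i) := by simp [hdt, hiv]
      omega
    have hvc : v ∈ Sᶜ := Finset.mem_compl.2 hvS
    have hins : (insert v S).card = K + 1 := by rw [Finset.card_insert_of_notMem hvS, hK]
    have hinc : (insert v S)ᶜ = Sᶜ.erase v := compl_insert
    have hGi := hG (insert v S)
    rw [hins, hinc, Finset.sum_insert hvS] at hGi
    simp only [Nat.add_sub_cancel] at hGi
    have htexp : d v = ∑ j ∈ S, min c (d j) + ∑ j ∈ Sᶜ.erase v, min c (d j) := by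
      rw [ht, union_compl_erase hvS]
    have hSmin : ∑ j ∈ S, min c (d j) = K * c := by
      have hall : ∀ j ∈ S, min c (d j) = c := fun j hj =>
        min_eq_left (by have := hbig j hj; omega)
      rw [Finset.sum_congr rfl hall, Finset.sum_const, hK, smul_eq_mul]
    have hsum2 : ∑ j ∈ Sᶜ.erase v, min (d j) (c * (K + 1))
        ≤ ∑ j ∈ Sᶜ.erase v, min (dt j) (c * K) + ∑ j ∈ Sᶜ.erase v, min c (d j) := by
      calc ∑ j ∈ Sᶜ.erase v, min (d j) (c * (K + 1))
          ≤ ∑ j ∈ Sᶜ.erase v, (min (dt j) (c * K) + min c (d j)) := by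
            apply Finset.sum_le_sum
            intro j hj
            have hjv : j ≠ v := (Finset.mem_erase.1 hj).1
            have hdd : dt j = d j - min c (d j) := by simp [hdt, hjv]
            have hck : c * (K + 1) = c * K + c := by ring
            omega
        _ = _ := Finset.sum_add_distrib
    have hdtd : ∑ i ∈ S, dt i + K * c = ∑ i ∈ S, d i := by
      have hall : ∀ i ∈ S, dt i + min c (d i) = d i := fun i hi => by
        have hiv : i ≠ v := fun h => hvS (h ▸ hi)
        have hdd : dt i = d i - min c (d i) := by simp [hdt, hiv]
        have := min_le_right c (d i)
        omega
      calc ∑ i ∈ S, dt i + K * c = ∑ i ∈ S, dt i + ∑ i ∈ S, min c (d i) := by rw [hSmin]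
        _ = ∑ i ∈ S, (dt i + min c (d i)) := Finset.sum_add_distrib.symm
        _ = ∑ i ∈ S, d i := Finset.sum_congr rfl hall
    have hgoalc : ∑ j ∈ Sᶜ, min (dt j) (c * K)
        = min (dt v) (c * K) + ∑ j ∈ Sᶜ.erase v, min (dt j) (c * K) :=
      (Finset.add_sum_erase Sᶜ (fun j => min (dt j) (c * K)) hvc).symm
    have hid : c * (K + 1) * K = c * K * (K - 1) + 2 * (c * K) := by
      cases K with
      | zero => ring
      | succ m => simp only [Nat.succ_sub_one]; ring
    have hdtv0 : min (dt v) (c * K) = 0 := by rw [hdtv]; simp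
    have hcomm : K * c = c * K := Nat.mul_comm K c
    omega


lemma qbound {c : ℕ} {d : Fin n → ℕ} (hG : Good c d) :
    ∑ i, d i * d i ≤ c * (n - 1) * ∑ i, d i := by
  have hbound : ∀ i : Fin n, d i ≤ c * (n - 1) := by
    intro i
    have h := hG {i}
    simp only [Finset.sum_singleton, Finset.card_singleton, compl_singleton] at h
    have h2 : ∑ j ∈ univ.erase i, min (d j) (c * 1) ≤ (univ.erase i).card • c :=
      Finset.sum_le_card_nsmul _ _ _ (fun j _ => by omega)
    have h3 : (univ.erase i).card = n - 1 := by
      rw [Finset.card_erase_of_mem (Finset.mem_univ i), Finset.card_univ, Fintype.card_fin]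
    rw [h3, smul_eq_mul] at h2
    have hcm : (n - 1) * c = c * (n - 1) := Nat.mul_comm _ _
    omega
  calc ∑ i, d i * d i ≤ ∑ i, c * (n - 1) * d i :=
        Finset.sum_le_sum fun i _ => Nat.mul_le_mul_right _ (hbound i)
    _ = c * (n - 1) * ∑ i, d i := (Finset.mul_sum _ _ _).symm

lemma mu_decr {X M' M Q Q' : ℕ} (hMM : M' < M) :
    M' * (X * M' + 1) + (X * M' - Q') < M * (X * M + 1) + (X * M - Q) := by
  have h2 : X * M' ≤ X * M := Nat.mul_le_mul_left _ (le_of_lt hMM)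
  have h1 : M' * (X * M' + 1) ≤ (M - 1) * (X * M + 1) :=
    Nat.mul_le_mul (by omega) (by omega)
  have h3 : (M - 1) * (X * M + 1) + (X * M + 1) = M * (X * M + 1) := by
    have hh : M - 1 + 1 = M := by omega
    calc (M - 1) * (X * M + 1) + (X * M + 1) = ((M - 1) + 1) * (X * M + 1) := by ring
      _ = M * (X * M + 1) := by rw [hh]
  omega

lemma realizes_zero {c : ℕ} {d : Fin n → ℕ} (h0 : ∀ i, d i = 0) :
    ∃ a, Realizes c d a := by
  refine ⟨fun _ _ => 0, fun _ _ => Nat.zero_le c, fun _ _ => rfl, fun _ => rfl, fun i => ?_⟩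
  rw [h0 i]
  simp

set_option maxHeartbeats 2000000 in
lemma suff {c : ℕ} (hc : 1 ≤ c) :
    ∀ N (d : Fin n → ℕ),
      (∑ i, d i) * (c * (n - 1) * (∑ i, d i) + 1)
          + (c * (n - 1) * (∑ i, d i) - ∑ i, d i * d i) ≤ N →
      Good c d → Even (∑ i, d i) → ∃ a, Realizes c d a := by
  intro N
  induction N with
  | zero =>
    intro d hm hG hE
    have h1 : (∑ i, d i) * (c * (n - 1) * (∑ i, d i) + 1) = 0 := by omega
    have h2 : ∑ i, d i = 0 := by
      rcases Nat.mul_eq_zero.1 h1 with h | h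
      · exact h
      · omega
    exact realizes_zero (fun i => Finset.sum_eq_zero_iff.1 h2 i (Finset.mem_univ i))
  | succ N ih =>
    intro d hm hG hE
    by_cases hS : ∑ i, d i = 0
    · exact realizes_zero (fun i => Finset.sum_eq_zero_iff.1 hS i (Finset.mem_univ i))
    · obtain ⟨v, hvmax⟩ : ∃ v, ∀ j, d j ≤ d v := by
        have hne : (univ : Finset (Fin n)).Nonempty := by
          rcases Finset.eq_empty_or_nonempty (univ : Finset (Fin n)) with he | h
          · exact absurd (by rw [he]; simp) hS
          · exact h
        obtain ⟨v, _, hvm⟩ := Finset.exists_max_image univ d hne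
        exact ⟨v, fun j => hvm j (Finset.mem_univ j)⟩
      have hdv : 1 ≤ d v := by
        by_contra hcon
        push_neg at hcon
        exact hS (Finset.sum_eq_zero (fun i _ => by have := hvmax i; omega))
      have hub : d v ≤ ∑ j ∈ univ.erase v, min c (d j) := by
        have h := hG {v}
        simp only [Finset.sum_singleton, Finset.card_singleton, compl_singleton] at h
        have hmm : ∑ j ∈ univ.erase v, min (d j) (c * 1) = ∑ j ∈ univ.erase v, min c (d j) :=
          Finset.sum_congr rfl fun j _ => by rw [mul_one, min_comm]
        omega
      rcases eq_or_lt_of_le hub with htv | hslack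
      · -- tight case : peel a saturated star at v
        set dt := fun j : Fin n => if j = v then 0 else d j - min c (d j) with hdt
        have hGt : Good c dt := lemmaB hc hG htv
        have hdtv : dt v = 0 := by simp [hdt]
        have hsum_dt : ∑ i, dt i + 2 * d v = ∑ i, d i := by
          have e1 : ∑ j ∈ univ.erase v, dt j = ∑ j, dt j := Finset.sum_erase _ hdtv
          have e2 : ∑ j ∈ univ.erase v, (dt j + min c (d j)) = ∑ j ∈ univ.erase v, d j :=
            Finset.sum_congr rfl fun j hj => by
              have hjv : j ≠ v := (Finset.mem_erase.1 hj).1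
              have hdd : dt j = d j - min c (d j) := by simp [hdt, hjv]
              have := min_le_right c (d j)
              omega
          have e3 : ∑ j ∈ univ.erase v, (dt j + min c (d j))
              = ∑ j ∈ univ.erase v, dt j + ∑ j ∈ univ.erase v, min c (d j) :=
            Finset.sum_add_distrib
          have e4 : d v + ∑ j ∈ univ.erase v, d j = ∑ j, d j :=
            Finset.add_sum_erase _ d (Finset.mem_univ v)
          omega
        have hEt : Even (∑ i, dt i) := by
          obtain ⟨t, ht2⟩ := hE
          exact ⟨t - d v, by omega⟩
        have hmt : (∑ i, dt i) * (c * (n - 1) * (∑ i, dt i) + 1)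
            + (c * (n - 1) * (∑ i, dt i) - ∑ i, dt i * dt i) ≤ N := by
          have hlt : ∑ i, dt i < ∑ i, d i := by omega
          have := mu_decr (X := c * (n - 1)) (Q' := ∑ i, dt i * dt i)
            (Q := ∑ i, d i * d i) hlt
          omega
        obtain ⟨a2, hab, has, had, hadeg⟩ := ih dt hmt hGt hEt
        have hrowv : ∀ j, a2 v j = 0 := by
          intro j
          by_cases hj : j = v
          · rw [hj]; exact had v
          · have h0 : ∑ j ∈ univ.erase v, a2 v j = 0 := by rw [← hadeg v, hdtv]
            exact Finset.sum_eq_zero_iff.1 h0 j (Finset.mem_erase.2 ⟨hj, Finset.mem_univ j⟩)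
        set A : Matrix (Fin n) (Fin n) ℕ := fun p q =>
          if p = v then (if q = v then 0 else min c (d q))
          else if q = v then min c (d p) else a2 p q with hA
        have hAvj : ∀ j, j ≠ v → A v j = min c (d j) := fun j hj => by simp [hA, hj]
        have hAiv : ∀ i, i ≠ v → A i v = min c (d i) := fun i hi => by simp [hA, hi]
        have hAij : ∀ i j, i ≠ v → j ≠ v → A i j = a2 i j := fun i j hi hj => by
          simp [hA, hi, hj]
        refine ⟨A, ?_, ?_, ?_, ?_⟩
        · intro p q
          by_cases hp : p = v <;> by_cases hq : q = v <;>
            simp [hA, hp, hq, min_le_left, hab p q]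
        · intro p q
          by_cases hp : p = v <;> by_cases hq : q = v <;>
            simp [hA, hp, hq, has p q]
        · intro i
          by_cases hi : i = v <;> simp [hA, hi, had i]
        · intro i
          by_cases hi : i = v
          · rw [hi]
            calc d v = ∑ j ∈ univ.erase v, min c (d j) := htv
              _ = ∑ j ∈ univ.erase v, A v j :=
                Finset.sum_congr rfl fun j hj => (hAvj j (Finset.mem_erase.1 hj).1).symm
          · have hvmem : v ∈ univ.erase i :=
              Finset.mem_erase.2 ⟨fun h => hi h.symm, Finset.mem_univ v⟩
            have r1 : A i v + ∑ j ∈ (univ.erase i).erase v, A i j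
                = ∑ j ∈ univ.erase i, A i j :=
              Finset.add_sum_erase _ (fun j => A i j) hvmem
            have r3 : ∑ j ∈ (univ.erase i).erase v, A i j
                = ∑ j ∈ (univ.erase i).erase v, a2 i j :=
              Finset.sum_congr rfl fun j hj =>
                hAij i j hi (Finset.mem_erase.1 hj).1
            have ha2iv : a2 i v = 0 := by rw [has i v]; exact hrowv i
            have r5 : ∑ j ∈ (univ.erase i).erase v, a2 i j = ∑ j ∈ univ.erase i, a2 i j :=
              Finset.sum_erase _ ha2iv
            have r4 : dt i = ∑ j ∈ univ.erase i, a2 i j := hadeg i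
            have hdd : dt i = d i - min c (d i) := by simp [hdt, hi]
            have hAivv : A i v = min c (d i) := hAiv i hi
            have hminle : min c (d i) ≤ d i := min_le_right _ _
            omega
      · -- slack case : spread move
        have hne2 : (univ.erase v).Nonempty := by
          rcases Finset.eq_empty_or_nonempty (univ.erase v) with he | h
          · rw [he, Finset.sum_empty] at hslack; omega
          · exact h
        obtain ⟨s, hsmem, hsmax⟩ := Finset.exists_max_image (univ.erase v) d hne2
        have hsv : s ≠ v := (Finset.mem_erase.1 hsmem).1
        have hsmax' : ∀ j, j ≠ v → d j ≤ d s := fun j hj =>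
          hsmax j (Finset.mem_erase.2 ⟨hj, Finset.mem_univ j⟩)
        have hds1 : 1 ≤ d s := by
          by_contra hcon
          push_neg at hcon
          have hz : ∀ j ∈ univ.erase v, min c (d j) = 0 := fun j hj => by
            have := hsmax' j (Finset.mem_erase.1 hj).1; omega
          rw [Finset.sum_eq_zero hz] at hslack
          omega
        set d2 := fun i => if i = v then d v + 1 else if i = s then d s - 1 else d i with hd2
        have hG2 : Good c d2 := lemmaA hc hG hE hsv hsmax' hds1 (by omega)
        have hd2v : d2 v = d v + 1 := by simp [hd2]
        have hd2s : d2 s = d s - 1 := by simp [hd2, hsv]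
        have hd2o : ∀ j, j ≠ v → j ≠ s → d2 j = d j := fun j h1 h2 => by simp [hd2, h1, h2]
        have splits : ∀ f : Fin n → ℕ,
            f v + ∑ i ∈ univ.erase v, f i = ∑ i, f i ∧
            f s + ∑ i ∈ (univ.erase v).erase s, f i = ∑ i ∈ univ.erase v, f i := fun f =>
          ⟨Finset.add_sum_erase _ f (Finset.mem_univ v), Finset.add_sum_erase _ f hsmem⟩
        have hrest2 : ∑ i ∈ (univ.erase v).erase s, d2 i
            = ∑ i ∈ (univ.erase v).erase s, d i :=
          Finset.sum_congr rfl fun i hi => by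
            obtain ⟨his, hi2⟩ := Finset.mem_erase.1 hi
            exact hd2o i (Finset.mem_erase.1 hi2).1 his
        have esum : ∑ i, d2 i = ∑ i, d i := by
          obtain ⟨r1, r3⟩ := splits d2
          obtain ⟨r2, r4⟩ := splits d
          omega
        have hE2 : Even (∑ i, d2 i) := by rw [esum]; exact hE
        have hQlt : ∑ i, d i * d i < ∑ i, d2 i * d2 i := by
          obtain ⟨r1, r3⟩ := splits (fun i => d2 i * d2 i)
          obtain ⟨r2, r4⟩ := splits (fun i => d i * d i)
          have hrest3 : ∑ i ∈ (univ.erase v).erase s, d2 i * d2 i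
              = ∑ i ∈ (univ.erase v).erase s, d i * d i :=
            Finset.sum_congr rfl fun i hi => by
              obtain ⟨his, hi2⟩ := Finset.mem_erase.1 hi
              rw [hd2o i (Finset.mem_erase.1 hi2).1 his]
          have ha : (d v + 1) * (d v + 1) = d v * d v + 2 * d v + 1 := by ring
          obtain ⟨e, he⟩ : ∃ e, d s = e + 1 := ⟨d s - 1, by omega⟩
          have hb : (d s - 1) * (d s - 1) + 2 * d s = d s * d s + 1 := by
            rw [he]; simp only [Nat.add_sub_cancel]; ring
          have hvs : d s ≤ d v := hvmax s
          simp only [hd2v, hd2s] at r1 r3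
          omega
        have hQ2 : ∑ i, d2 i * d2 i ≤ c * (n - 1) * ∑ i, d2 i := qbound hG2
        have hm2 : (∑ i, d2 i) * (c * (n - 1) * (∑ i, d2 i) + 1)
            + (c * (n - 1) * (∑ i, d2 i) - ∑ i, d2 i * d2 i) ≤ N := by
          rw [esum]
          rw [esum] at hQ2
          omega
        obtain ⟨a2, hb2', hs2', hdg2', hdeg2'⟩ := ih d2 hm2 hG2 hE2
        have hu : ∃ u, u ≠ v ∧ u ≠ s ∧ a2 s u < a2 v u := by
          by_contra hcon
          push_neg at hcon
          have h1 : d2 v ≤ d2 s := by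
            rw [hdeg2' v, hdeg2' s]
            have r1 : a2 v s + ∑ j ∈ (univ.erase v).erase s, a2 v j
                = ∑ j ∈ univ.erase v, a2 v j :=
              Finset.add_sum_erase _ (fun j => a2 v j) hsmem
            have hvmem : v ∈ univ.erase s :=
              Finset.mem_erase.2 ⟨Ne.symm hsv, Finset.mem_univ v⟩
            have r2 : a2 s v + ∑ j ∈ (univ.erase s).erase v, a2 s j
                = ∑ j ∈ univ.erase s, a2 s j :=
              Finset.add_sum_erase _ (fun j => a2 s j) hvmem
            have hsets : (univ.erase v).erase s = (univ.erase s).erase v := by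
              ext x
              simp only [Finset.mem_erase, Finset.mem_univ, and_true]
              tauto
            rw [← hsets] at r2
            have r3 : ∑ j ∈ (univ.erase v).erase s, a2 v j
                ≤ ∑ j ∈ (univ.erase v).erase s, a2 s j :=
              Finset.sum_le_sum fun j hj => by
                obtain ⟨hjs, hj2⟩ := Finset.mem_erase.1 hj
                exact hcon j (Finset.mem_erase.1 hj2).1 hjs
            have r4 : a2 v s = a2 s v := hs2' v s
            omega
          rw [hd2v, hd2s] at h1
          have := hvmax s
          omega
        obtain ⟨u, huv, hus, hult⟩ := hu
        have hu1 : 1 ≤ a2 v u := by omega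
        have huc : a2 s u + 1 ≤ c := by have := hb2' v u; omega
        set A : Matrix (Fin n) (Fin n) ℕ := fun p q =>
          if (p = v ∧ q = u) ∨ (p = u ∧ q = v) then a2 p q - 1
          else if (p = s ∧ q = u) ∨ (p = u ∧ q = s) then a2 p q + 1
          else a2 p q with hA
        have hAvu : A v u = a2 v u - 1 := by simp [hA]
        have hAuv : A u v = a2 u v - 1 := by simp [hA]
        have hAsu : A s u = a2 s u + 1 := by simp [hA, hsv, huv, hus, Ne.symm hus]
        have hAus : A u s = a2 u s + 1 := by simp [hA, hsv, huv, hus, Ne.symm hsv]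
        have hAo : ∀ p q, ¬((p = v ∧ q = u) ∨ (p = u ∧ q = v)) →
            ¬((p = s ∧ q = u) ∨ (p = u ∧ q = s)) → A p q = a2 p q := fun p q h1 h2 => by
          simp only [hA]
          rw [if_neg h1, if_neg h2]
        refine ⟨A, ?_, ?_, ?_, ?_⟩
        · intro p q
          simp only [hA]
          split_ifs with h1 h2
          · have := hb2' p q; omega
          · rcases h2 with ⟨hp, hq⟩ | ⟨hp, hq⟩
            · rw [hp, hq]; omega
            · rw [hp, hq]; have := hs2' u s; omega
          · exact hb2' p q
        · intro p q
          simp only [hA]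
          by_cases h1 : (p = v ∧ q = u) ∨ (p = u ∧ q = v)
          · have h1' : (q = v ∧ p = u) ∨ (q = u ∧ p = v) := by tauto
            rw [if_pos h1, if_pos h1', hs2' p q]
          · have h1' : ¬((q = v ∧ p = u) ∨ (q = u ∧ p = v)) := by tauto
            rw [if_neg h1, if_neg h1']
            by_cases h2 : (p = s ∧ q = u) ∨ (p = u ∧ q = s)
            · have h2' : (q = s ∧ p = u) ∨ (q = u ∧ p = s) := by tauto
              rw [if_pos h2, if_pos h2', hs2' p q]
            · have h2' : ¬((q = s ∧ p = u) ∨ (q = u ∧ p = s)) := by tauto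
              rw [if_neg h2, if_neg h2', hs2' p q]
        · intro i
          have h1 : ¬((i = v ∧ i = u) ∨ (i = u ∧ i = v)) := by
            rintro (⟨rfl, h2⟩ | ⟨rfl, h2⟩)
            · exact huv h2.symm
            · exact huv h2
          have h2 : ¬((i = s ∧ i = u) ∨ (i = u ∧ i = s)) := by
            rintro (⟨rfl, h2⟩ | ⟨rfl, h2⟩)
            · exact hus h2.symm
            · exact hus h2
          rw [hAo i i h1 h2]
          exact hdg2' i
        · intro i
          by_cases hiv : i = v
          · rw [hiv]
            have humem : u ∈ univ.erase v := Finset.mem_erase.2 ⟨huv, Finset.mem_univ u⟩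
            have r1 : A v u + ∑ j ∈ (univ.erase v).erase u, A v j
                = ∑ j ∈ univ.erase v, A v j :=
              Finset.add_sum_erase _ (fun j => A v j) humem
            have r2 : a2 v u + ∑ j ∈ (univ.erase v).erase u, a2 v j
                = ∑ j ∈ univ.erase v, a2 v j :=
              Finset.add_sum_erase _ (fun j => a2 v j) humem
            have r3 : ∑ j ∈ (univ.erase v).erase u, A v j
                = ∑ j ∈ (univ.erase v).erase u, a2 v j :=
              Finset.sum_congr rfl fun j hj => by
                obtain ⟨hju, hj2⟩ := Finset.mem_erase.1 hj
                apply hAo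
                · rintro (⟨_, h⟩ | ⟨h, _⟩)
                  · exact hju h
                  · exact huv h.symm
                · rintro (⟨h, _⟩ | ⟨h, _⟩)
                  · exact hsv h.symm
                  · exact huv h.symm
            have r4 : d2 v = ∑ j ∈ univ.erase v, a2 v j := hdeg2' v
            rw [hd2v] at r4
            rw [hAvu] at r1
            omega
          · by_cases his : i = s
            · rw [his]
              have humem : u ∈ univ.erase s :=
                Finset.mem_erase.2 ⟨hus, Finset.mem_univ u⟩
              have r1 : A s u + ∑ j ∈ (univ.erase s).erase u, A s j
                  = ∑ j ∈ univ.erase s, A s j :=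
                Finset.add_sum_erase _ (fun j => A s j) humem
              have r2 : a2 s u + ∑ j ∈ (univ.erase s).erase u, a2 s j
                  = ∑ j ∈ univ.erase s, a2 s j :=
                Finset.add_sum_erase _ (fun j => a2 s j) humem
              have r3 : ∑ j ∈ (univ.erase s).erase u, A s j
                  = ∑ j ∈ (univ.erase s).erase u, a2 s j :=
                Finset.sum_congr rfl fun j hj => by
                  obtain ⟨hju, hj2⟩ := Finset.mem_erase.1 hj
                  apply hAo
                  · rintro (⟨h, _⟩ | ⟨h, _⟩)
                    · exact hsv h
                    · exact hus (h.symm)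
                  · rintro (⟨_, h⟩ | ⟨h, _⟩)
                    · exact hju h
                    · exact hus h.symm
              have r4 : d2 s = ∑ j ∈ univ.erase s, a2 s j := hdeg2' s
              rw [hd2s] at r4
              rw [hAsu] at r1
              omega
            · by_cases hiu : i = u
              · rw [hiu]
                have hvmem : v ∈ univ.erase u :=
                  Finset.mem_erase.2 ⟨Ne.symm huv, Finset.mem_univ v⟩
                have hsmem3 : s ∈ (univ.erase u).erase v :=
                  Finset.mem_erase.2 ⟨hsv,
                    Finset.mem_erase.2 ⟨Ne.symm hus, Finset.mem_univ s⟩⟩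
                have r1 : A u v + ∑ j ∈ (univ.erase u).erase v, A u j
                    = ∑ j ∈ univ.erase u, A u j :=
                  Finset.add_sum_erase _ (fun j => A u j) hvmem
                have r2 : A u s + ∑ j ∈ ((univ.erase u).erase v).erase s, A u j
                    = ∑ j ∈ (univ.erase u).erase v, A u j :=
                  Finset.add_sum_erase _ (fun j => A u j) hsmem3
                have r1' : a2 u v + ∑ j ∈ (univ.erase u).erase v, a2 u j
                    = ∑ j ∈ univ.erase u, a2 u j :=
                  Finset.add_sum_erase _ (fun j => a2 u j) hvmem
                have r2' : a2 u s + ∑ j ∈ ((univ.erase u).erase v).erase s, a2 u j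
                    = ∑ j ∈ (univ.erase u).erase v, a2 u j :=
                  Finset.add_sum_erase _ (fun j => a2 u j) hsmem3
                have r5 : ∑ j ∈ ((univ.erase u).erase v).erase s, A u j
                    = ∑ j ∈ ((univ.erase u).erase v).erase s, a2 u j :=
                  Finset.sum_congr rfl fun j hj => by
                    obtain ⟨hjs, hj2⟩ := Finset.mem_erase.1 hj
                    obtain ⟨hjv, hj3⟩ := Finset.mem_erase.1 hj2
                    apply hAo
                    · rintro (⟨h, _⟩ | ⟨_, h⟩)
                      · exact huv h
                      · exact hjv h
                    · rintro (⟨h, _⟩ | ⟨_, h⟩)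
                      · exact hus h
                      · exact hjs h
                have r4 : d2 u = ∑ j ∈ univ.erase u, a2 u j := hdeg2' u
                rw [hd2o u huv hus] at r4
                have ha2uv : a2 u v = a2 v u := hs2' u v
                rw [hAuv, hAus] at *
                omega
              · have hall : ∀ j, A i j = a2 i j := fun j =>
                  hAo i j
                    (by rintro (⟨h, _⟩ | ⟨h, _⟩); exact hiv h; exact hiu h)
                    (by rintro (⟨h, _⟩ | ⟨h, _⟩); exact his h; exact hiu h)
                have r4 : d2 i = ∑ j ∈ univ.erase i, a2 i j := hdeg2' i
                rw [hd2o i hiv his] at r4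
                rw [r4]
                exact Finset.sum_congr rfl fun j _ => (hall j).symm

lemma good_of_prefix {c : ℕ} {d : Fin n → ℕ}
    (hmono : ∀ i j : Fin n, i ≤ j → d j ≤ d i)
    (h : ∀ k : ℕ, 1 ≤ k → k ≤ n →
      ∑ i ∈ univ.filter (fun i : Fin n => (i : ℕ) < k), d i ≤
        c * k * (k - 1) + ∑ j ∈ univ.filter (fun j : Fin n => k ≤ (j : ℕ)),
          min (d j) (c * k)) :
    Good c d := by
  intro S
  obtain ⟨k, hk⟩ : ∃ k, S.card = k := ⟨_, rfl⟩
  rw [hk]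
  rcases Nat.eq_zero_or_pos k with h0 | hpos
  · have hS0 : S = ∅ := Finset.card_eq_zero.1 (by omega)
    rw [hS0]
    simp
  · have hkn : k ≤ n := by
      have h2 := Finset.card_le_univ S
      rw [hk] at h2
      calc k ≤ (univ : Finset (Fin n)).card := h2
        _ = n := by rw [Finset.card_univ, Fintype.card_fin]
    have hpre := h k hpos hkn
    have hPc : (univ.filter (fun i : Fin n => (i : ℕ) < k))ᶜ
        = univ.filter (fun j : Fin n => k ≤ (j : ℕ)) := by
      rw [compl_filter]
      exact Finset.filter_congr fun j _ => by simp [not_lt]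
    have hpre' : ∑ i ∈ univ.filter (fun i : Fin n => (i : ℕ) < k), d i
        ≤ c * k * (k - 1)
          + ∑ j ∈ (univ.filter (fun i : Fin n => (i : ℕ) < k))ᶜ, min (d j) (c * k) := by
      rw [hPc]; exact hpre
    have hgmono : ∀ i j : Fin n, i ≤ j →
        d j - min (d j) (c * k) ≤ d i - min (d i) (c * k) := fun i j hij => by
      have := hmono i j hij; omega
    have h1 : ∑ i ∈ S, (d i - min (d i) (c * k))
        ≤ ∑ i ∈ univ.filter (fun i : Fin n => (i : ℕ) < k), (d i - min (d i) (c * k)) := by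
      have := sum_top_k (g := fun j => d j - min (d j) (c * k)) hgmono S
      rwa [hk] at this
    have hminmono : ∀ i j : Fin n, i ≤ j →
        min (d j) (c * k) ≤ min (d i) (c * k) := fun i j hij => by
      have := hmono i j hij; omega
    have h2 : ∑ i ∈ S, min (d i) (c * k)
        ≤ ∑ i ∈ univ.filter (fun i : Fin n => (i : ℕ) < k), min (d i) (c * k) := by
      have := sum_top_k (g := fun j => min (d j) (c * k)) hminmono S
      rwa [hk] at this
    have hsplit_d : ∀ T : Finset (Fin n),
        ∑ i ∈ T, d i = ∑ i ∈ T, (d i - min (d i) (c * k)) + ∑ i ∈ T, min (d i) (c * k) :=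
      fun T => by
        rw [← Finset.sum_add_distrib]
        exact Finset.sum_congr rfl fun i _ => by omega
    have htot1 : ∑ i ∈ S, min (d i) (c * k) + ∑ i ∈ Sᶜ, min (d i) (c * k)
        = ∑ i ∈ univ.filter (fun i : Fin n => (i : ℕ) < k), min (d i) (c * k)
          + ∑ i ∈ (univ.filter (fun i : Fin n => (i : ℕ) < k))ᶜ, min (d i) (c * k) := by
      rw [Finset.sum_add_sum_compl, Finset.sum_add_sum_compl]
    have e1 := hsplit_d S
    have e2 := hsplit_d (univ.filter (fun i : Fin n => (i : ℕ) < k))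
    omega

end EG

theorem finite_discrete_graphical_iff (n r : ℕ) (hr : 2 ≤ r) (d : Fin n → ℕ)
    (hmono : ∀ i j : Fin n, i ≤ j → d j ≤ d i) :
    (∃ a : Matrix (Fin n) (Fin n) ℕ, (∀ i j, a i j ≤ r - 1) ∧ (∀ i j, a i j = a j i) ∧
      (∀ i, a i i = 0) ∧ ∀ i, d i = ∑ j ∈ Finset.univ.erase i, a i j) ↔
    (Even (∑ i, d i) ∧ ∀ k : ℕ, 1 ≤ k → k ≤ n →
      ∑ i ∈ Finset.univ.filter (fun i : Fin n => (i : ℕ) < k), d i ≤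
        (r - 1) * k * (k - 1) +
          ∑ j ∈ Finset.univ.filter (fun j : Fin n => k ≤ (j : ℕ)),
            min (d j) ((r - 1) * k)) := by
  have hc : 1 ≤ r - 1 := by omega
  constructor
  · rintro ⟨a, hb, hsym, hdiag, hdeg⟩
    have hre : Realizes (r - 1) d a := ⟨hb, hsym, hdiag, hdeg⟩
    have hGd := realizes_good hre
    refine ⟨even_total hre, ?_⟩
    intro k hk1 hkn
    have h := hGd (univ.filter (fun i : Fin n => (i : ℕ) < k))
    rw [card_filter_lt hkn] at h
    have hPc : (univ.filter (fun i : Fin n => (i : ℕ) < k))ᶜ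
        = univ.filter (fun j : Fin n => k ≤ (j : ℕ)) := by
      rw [compl_filter]
      exact Finset.filter_congr fun j _ => by simp [not_lt]
    rwa [hPc] at h
  · rintro ⟨hE, hcond⟩
    have hGd : Good (r - 1) d := good_of_prefix hmono hcond
    obtain ⟨a, hb, hsym, hdiag, hdeg⟩ := suff hc _ d (le_refl _) hGd hE
    exact ⟨a, hb, hsym, hdiag, hdeg⟩
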